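/- arXiv:2308.12161 — 2 statements merged into one kernel-verified Lean document; each statement's English description precedes it below -/
import Mathlib

section
/- Let f : ℝⁿ → ℝ be differentiable and convex, g : ℝⁿ → ℝᵏ have differentiable convex components, and h(x) = Cx − d be affine. Suppose x* ∈ ℝⁿ, λ* ∈ ℝᵏ with λ* ≥ 0, and μ* ∈ ℝᵐ satisfy the KKT conditions: ∇f(x*) + Σ_j λ*_j ∇g_j(x*) + Cᵀμ* = 0, g(x*) ≤ 0, Cx* = d, and λ*_j g_j(x*) = 0 for all j. If the scalar penalty parameter c satisfies c ≥ max(‖λ*‖_∞, ‖μ*‖_∞), then x* is a global minimizer over ℝⁿ of the ℓ₁-exact-penalty function φ(x) = f(x) + c·( Σ_{j=1}^{k} max{0, g_j(x)} + Σ_{l=1}^{m} |(Cx − d)_l| ). -/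
lemma global_min_of_hasFDerivAt_zero {E : Type*} [NormedAddCommGroup E] [NormedSpace ℝ E]
    (L : E → ℝ) (hLc : ConvexOn ℝ Set.univ L) (x₀ : E)
    (hΦ : HasFDerivAt L (0 : E →L[ℝ] ℝ) x₀) : ∀ x, L x₀ ≤ L x := by
  intro x
  set ψ : ℝ → ℝ := fun t => L (x₀ + t • (x - x₀)) with hψ
  have hline : ∀ t : ℝ, (AffineMap.lineMap x₀ x : ℝ →ᵃ[ℝ] E) t = x₀ + t • (x - x₀) := by
    intro t; simp [AffineMap.lineMap_apply]; abel
  have hψc : ConvexOn ℝ Set.univ ψ := by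
    have := hLc.comp_affineMap (AffineMap.lineMap x₀ x : ℝ →ᵃ[ℝ] E)
    simp only [Set.preimage_univ] at this
    have heq : ψ = L ∘ ⇑(AffineMap.lineMap x₀ x : ℝ →ᵃ[ℝ] E) := by
      funext t; simp [ψ, hline t]
    rw [heq]; exact this
  have hlineD : HasDerivAt (fun t : ℝ => x₀ + t • (x - x₀)) (x - x₀) 0 := by
    simpa using ((hasDerivAt_id (0:ℝ)).smul_const (x - x₀)).const_add x₀
  have hψd : HasDerivAt ψ 0 0 := by
    have hΦ' : HasFDerivAt L (0 : E →L[ℝ] ℝ) (x₀ + (0:ℝ) • (x - x₀)) := by simpa using hΦ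
    have := hΦ'.comp_hasDerivAt (0:ℝ) hlineD
    exact this
  have h01 : (0:ℝ) ≤ slope ψ 0 1 :=
    hψc.le_slope_of_hasDerivAt (Set.mem_univ 0) (Set.mem_univ 1) one_pos hψd
  have : ψ 0 ≤ ψ 1 := by
    simp [slope_def_field] at h01
    linarith
  simpa [ψ] using this


/-- Exact ℓ₁ penalty in the convex case: if `(xs, lam, mu)` satisfies the KKT conditions of the
convex problem `min f(x) s.t. g(x) ≤ 0, C x = d` and the penalty parameter `c` dominates the
∞-norms of the multipliers, then `xs` globally minimizes the ℓ₁-exact-penalty function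
`φ(x) = f(x) + c (Σ_j max{0, g_j(x)} + Σ_l |(C x − d)_l|)`. -/
theorem exact_l1_penalty_of_kkt
    (n k m : ℕ)
    (f : (Fin n → ℝ) → ℝ) (g : Fin k → (Fin n → ℝ) → ℝ)
    (C : Matrix (Fin m) (Fin n) ℝ) (d : Fin m → ℝ)
    (hf : Differentiable ℝ f) (hfc : ConvexOn ℝ Set.univ f)
    (hg : ∀ j, Differentiable ℝ (g j)) (hgc : ∀ j, ConvexOn ℝ Set.univ (g j))
    (xs : Fin n → ℝ) (lam : Fin k → ℝ) (mu : Fin m → ℝ)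
    (hlam : ∀ j, 0 ≤ lam j)
    (hstat : ∀ v, fderiv ℝ f xs v + ∑ j, lam j * fderiv ℝ (g j) xs v
      + ∑ l, mu l * C.mulVec v l = 0)
    (hgx : ∀ j, g j xs ≤ 0) (hhx : C.mulVec xs = d)
    (hcs : ∀ j, lam j * g j xs = 0)
    (c : ℝ) (hc : max ‖lam‖ ‖mu‖ ≤ c) :
    ∀ x, f xs + c * ((∑ j, max 0 (g j xs)) + ∑ l, |C.mulVec xs l - d l|) ≤
      f x + c * ((∑ j, max 0 (g j x)) + ∑ l, |C.mulVec x l - d l|) := by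
  intro x
  -- the linear functional  v ↦ ∑ l, mu l * (C v) l
  set T : (Fin n → ℝ) →ₗ[ℝ] ℝ :=
    ∑ l, mu l • ((LinearMap.proj l).comp C.mulVecLin) with hT
  have hTapp : ∀ v, T v = ∑ l, mu l * C.mulVec v l := by
    intro v; simp [hT, LinearMap.sum_apply]
  -- the Lagrangian
  set L : (Fin n → ℝ) → ℝ :=
    fun y => f y + (∑ j, lam j * g j y) + ∑ l, mu l * (C.mulVec y l - d l) with hL
  -- convexity of L
  have hsumc : ConvexOn ℝ Set.univ (fun y => ∑ j, lam j * g j y) := by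
    classical
    have : ∀ s : Finset (Fin k), ConvexOn ℝ Set.univ (fun y => ∑ j ∈ s, lam j * g j y) := by
      intro s
      induction s using Finset.induction with
      | empty => simpa using convexOn_const (0:ℝ) convex_univ
      | insert a s' hj ih =>
        have h1 : ConvexOn ℝ Set.univ (fun y => lam a * g a y) := by
          simpa [smul_eq_mul] using (hgc a).smul (hlam a)
        simp only [Finset.sum_insert hj]; exact h1.add ih
    exact this Finset.univ
  have hlinc : ConvexOn ℝ Set.univ (fun y => ∑ l, mu l * (C.mulVec y l - d l)) := by
    have heq : (fun y => ∑ l, mu l * (C.mulVec y l - d l))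
        = fun y => T y - ∑ l, mu l * d l := by
      funext y
      simp [hTapp, mul_sub, Finset.sum_sub_distrib]
    rw [heq]
    have : ConvexOn ℝ Set.univ (fun y => T y) := T.convexOn convex_univ
    exact this.sub (concaveOn_const _ convex_univ)
  have hLc : ConvexOn ℝ Set.univ L := (hfc.add hsumc).add hlinc
  -- derivative of L at xs
  set Φ : (Fin n → ℝ) →L[ℝ] ℝ :=
    fderiv ℝ f xs + (∑ j, lam j • fderiv ℝ (g j) xs) + LinearMap.toContinuousLinearMap T with hΦ
  have hLd : HasFDerivAt L Φ xs := by
    have h1 : HasFDerivAt f (fderiv ℝ f xs) xs := (hf xs).hasFDerivAt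
    have h2 : HasFDerivAt (fun y => ∑ j, lam j * g j y)
        (∑ j, lam j • fderiv ℝ (g j) xs) xs := by
      refine HasFDerivAt.fun_sum fun j _ => ?_
      exact ((hg j xs).hasFDerivAt.const_smul (lam j))
    have h3 : HasFDerivAt (fun y => ∑ l, mu l * (C.mulVec y l - d l))
        (LinearMap.toContinuousLinearMap T) xs := by
      have heq : (fun y : Fin n → ℝ => ∑ l, mu l * (C.mulVec y l - d l))
          = fun y => (LinearMap.toContinuousLinearMap T) y - ∑ l, mu l * d l := by
        funext y
        simp [hTapp, mul_sub, Finset.sum_sub_distrib]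
      rw [heq]
      exact (LinearMap.toContinuousLinearMap T).hasFDerivAt.sub_const _
    exact (h1.add h2).add h3
  have hΦ0 : Φ = 0 := by
    ext v
    have := hstat v
    simpa [hΦ, ContinuousLinearMap.sum_apply, hTapp] using this
  have hmin : ∀ y, L xs ≤ L y :=
    global_min_of_hasFDerivAt_zero L hLc xs (hΦ0 ▸ hLd)
  -- bounds on multipliers
  have hc1 : ∀ j, lam j ≤ c := fun j =>
    (le_abs_self _).trans ((norm_le_pi_norm lam j).trans ((le_max_left _ _).trans hc))
  have hc2 : ∀ l, |mu l| ≤ c := fun l =>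
    (norm_le_pi_norm mu l).trans ((le_max_right _ _).trans hc)
  have hc0 : 0 ≤ c := (norm_nonneg mu).trans ((le_max_right _ _).trans hc)
  -- value at xs
  have hLxs : L xs = f xs := by
    simp [hL, hcs, hhx]
  have hpen_xs : (∑ j, max 0 (g j xs)) = 0 := by
    refine Finset.sum_eq_zero fun j _ => max_eq_left (hgx j)
  have hpen_xs2 : (∑ l, |C.mulVec xs l - d l|) = 0 := by
    refine Finset.sum_eq_zero fun l _ => by simp [hhx]
  -- L x ≤ penalty value at x
  have hLx_le : L x ≤ f x + c * ((∑ j, max 0 (g j x)) + ∑ l, |C.mulVec x l - d l|) := by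
    have h1 : (∑ j, lam j * g j x) ≤ c * ∑ j, max 0 (g j x) := by
      rw [Finset.mul_sum]
      refine Finset.sum_le_sum fun j _ => ?_
      calc lam j * g j x ≤ lam j * max 0 (g j x) :=
            mul_le_mul_of_nonneg_left (le_max_right _ _) (hlam j)
        _ ≤ c * max 0 (g j x) :=
            mul_le_mul_of_nonneg_right (hc1 j) (le_max_left _ _)
    have h2 : (∑ l, mu l * (C.mulVec x l - d l)) ≤ c * ∑ l, |C.mulVec x l - d l| := by
      rw [Finset.mul_sum]
      refine Finset.sum_le_sum fun l _ => ?_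
      calc mu l * (C.mulVec x l - d l) ≤ |mu l * (C.mulVec x l - d l)| := le_abs_self _
        _ = |mu l| * |C.mulVec x l - d l| := abs_mul _ _
        _ ≤ c * |C.mulVec x l - d l| :=
            mul_le_mul_of_nonneg_right (hc2 l) (abs_nonneg _)
    simp only [hL]
    rw [mul_add]
    linarith
  calc f xs + c * ((∑ j, max 0 (g j xs)) + ∑ l, |C.mulVec xs l - d l|)
      = L xs := by rw [hLxs, hpen_xs, hpen_xs2]; ring
    _ ≤ L x := hmin x
    _ ≤ _ := hLx_le
end

section
/- Fix N data points (x*_i, ū_i) ∈ ℝⁿ × ℝᵖ, i = 1,…,N, positive penalty weights c₁, c₂, c₃, matrices Q ∈ ℝⁿˣⁿ and R ∈ ℝⁿˣᵖ, and affine parameterizations ω ↦ A(ω) ∈ ℝᵏˣⁿ and ω ↦ b(ω, u) ∈ ℝᵏ (affine in ω for each fixed u). Define Φ(θ, ω, x̂, λ) = Σ_{i=1}^{N} [ ‖x*_i − x̂_i‖₂² + c₁ ‖Q x̂_i + R ū_i + θ + A(ω)ᵀ λ_i‖₁ + c₂ Σ_{j=1}^{k} max{0, (A(ω) x̂_i −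 b(ω, ū_i))_j} + c₃ |λ_iᵀ (A(ω) x̂_i − b(ω, ū_i))| ], where x̂ = (x̂_1,…,x̂_N) ∈ (ℝⁿ)ᴺ, λ = (λ_1,…,λ_N) ∈ (ℝᵏ)ᴺ, θ ∈ ℝⁿ, and ω ranges over a convex set Ω. Then Φ is multiconvex with respect to the block partition {(θ, ω), x̂, λ}: Φ is convex in (θ, ω) for each fixed (x̂, λ), convex in x̂ for each fixed (θ, ω, λ), and convex in λ for each fixed (θ, ω, x̂). -/
open Matrix

/-- A function satisfying the affine combination identity on a set. -/
def ComboAffine {E : Type*} [AddCommGroup E] [Module ℝ E] (s : Set E) (f : E → ℝ) : Prop :=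
  ∀ ⦃x⦄, x ∈ s → ∀ ⦃y⦄, y ∈ s → ∀ ⦃a b : ℝ⦄, 0 ≤ a → 0 ≤ b → a + b = 1 →
    f (a • x + b • y) = a * f x + b * f y

theorem ComboAffine.comp_convexOn {E : Type*} [AddCommGroup E] [Module ℝ E] {s : Set E}
    (hs : Convex ℝ s) {f : E → ℝ} (hf : ComboAffine s f) {g : ℝ → ℝ}
    (hg : ConvexOn ℝ Set.univ g) : ConvexOn ℝ s (fun x => g (f x)) := by
  refine ⟨hs, fun x hx y hy a b ha hb hab => ?_⟩
  show g (f (a • x + b • y)) ≤ _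
  rw [hf hx hy ha hb hab]
  simpa using hg.2 (Set.mem_univ (f x)) (Set.mem_univ (f y)) ha hb hab

theorem comboAffine_const {E : Type*} [AddCommGroup E] [Module ℝ E] {s : Set E} (c : ℝ) :
    ComboAffine s (fun _ => c) := by
  intro x _ y _ a b _ _ hab
  linear_combination c * hab.symm

theorem ComboAffine.add {E : Type*} [AddCommGroup E] [Module ℝ E] {s : Set E} {f g : E → ℝ}
    (hf : ComboAffine s f) (hg : ComboAffine s g) : ComboAffine s (fun x => f x + g x) := by
  intro x hx y hy a b ha hb hab
  simp only [hf hx hy ha hb hab, hg hx hy ha hb hab]; ring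

theorem ComboAffine.const_mul {E : Type*} [AddCommGroup E] [Module ℝ E] {s : Set E} {f : E → ℝ}
    (c : ℝ) (hf : ComboAffine s f) : ComboAffine s (fun x => c * f x) := by
  intro x hx y hy a b ha hb hab
  simp only [hf hx hy ha hb hab]; ring

theorem ComboAffine.sum {E ι : Type*} [AddCommGroup E] [Module ℝ E] {s : Set E}
    (t : Finset ι) {f : ι → E → ℝ} (h : ∀ j ∈ t, ComboAffine s (f j)) :
    ComboAffine s (fun x => ∑ j ∈ t, f j x) := by
  intro x hx y hy a b ha hb hab
  rw [Finset.mul_sum, Finset.mul_sum, ← Finset.sum_add_distrib]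
  exact Finset.sum_congr rfl fun j hj => h j hj hx hy ha hb hab

theorem convexOn_abs' : ConvexOn ℝ (Set.univ : Set ℝ) (fun t => |t|) := by
  refine ⟨convex_univ, fun x _ y _ a b ha hb _ => ?_⟩
  simp only [smul_eq_mul]
  calc |a * x + b * y| ≤ |a * x| + |b * y| := abs_add_le _ _
    _ = a * |x| + b * |y| := by rw [abs_mul, abs_mul, abs_of_nonneg ha, abs_of_nonneg hb]

theorem convexOn_max0 : ConvexOn ℝ (Set.univ : Set ℝ) (fun t => max 0 t) := by
  have := (convexOn_id (convex_univ : Convex ℝ (Set.univ : Set ℝ))).sup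
    (convexOn_const (0:ℝ) convex_univ)
  simpa [Pi.sup_def, max_comm] using this

theorem convexOn_finset_sum {E ι : Type*} [AddCommGroup E] [Module ℝ E] {s : Set E}
    (hs : Convex ℝ s) (t : Finset ι) {f : ι → E → ℝ} (h : ∀ i ∈ t, ConvexOn ℝ s (f i)) :
    ConvexOn ℝ s (fun x => ∑ i ∈ t, f i x) := by
  classical
  induction t using Finset.induction with
  | empty => simpa using convexOn_const (0:ℝ) hs
  | @insert i t hni ih =>
    simp only [Finset.sum_insert hni]
    exact (h i (Finset.mem_insert_self _ _)).add (ih fun j hj => h j (Finset.mem_insert_of_mem hj))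

theorem convexOn_const_mul {E : Type*} [AddCommGroup E] [Module ℝ E] {s : Set E}
    {c : ℝ} (hc : 0 ≤ c) {g : E → ℝ} (hg : ConvexOn ℝ s g) :
    ConvexOn ℝ s (fun x => c * g x) := by
  simpa [smul_eq_mul] using hg.smul hc


/-- Multiconvexity of the exact-penalty objective `Φ` of the decision-focused learning problem
for a quadratic surrogate program with inequality constraints `A(ω) x ≤ b(ω, u)`, with respect
to the block partition `{(θ, ω), xh, λ}`: `Φ` is convex in `(θ, ω)` on `univ ×ˢ Ω` for each
fixed `(xh, λ)`, convex in `xh` for each fixed `(θ, ω, λ)`, and convex in `λ` for each fixed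
`(θ, ω, xh)`. -/
theorem penalty_objective_multiconvex
    (N n p k q : ℕ)
    (xs : Fin N → Fin n → ℝ) (u : Fin N → Fin p → ℝ)
    (c₁ c₂ c₃ : ℝ) (hc₁ : 0 < c₁) (hc₂ : 0 < c₂) (hc₃ : 0 < c₃)
    (Q : Matrix (Fin n) (Fin n) ℝ) (R : Matrix (Fin n) (Fin p) ℝ)
    (A : (Fin q → ℝ) →ᵃ[ℝ] Matrix (Fin k) (Fin n) ℝ)
    (b : (Fin p → ℝ) → (Fin q → ℝ) →ᵃ[ℝ] (Fin k → ℝ))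
    (Ω : Set (Fin q → ℝ)) (hΩ : Convex ℝ Ω)
    (Φ : (Fin n → ℝ) → (Fin q → ℝ) → (Fin N → Fin n → ℝ) → (Fin N → Fin k → ℝ) → ℝ)
    (hΦ : Φ = fun θ ω xh lam => ∑ i,
      ((∑ j, (xs i j - xh i j) ^ 2)
       + c₁ * ∑ j, |Q.mulVec (xh i) j + R.mulVec (u i) j + θ j + (A ω)ᵀ.mulVec (lam i) j|
       + c₂ * ∑ j, max 0 ((A ω).mulVec (xh i) j - b (u i) ω j)
       + c₃ * |∑ j, lam i j * ((A ω).mulVec (xh i) j - b (u i) ω j)|)) :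
    (∀ xh lam, ConvexOn ℝ (Set.univ ×ˢ Ω)
      (fun tw : (Fin n → ℝ) × (Fin q → ℝ) => Φ tw.1 tw.2 xh lam)) ∧
    (∀ θ, ∀ ω ∈ Ω, ∀ lam, ConvexOn ℝ Set.univ (fun xh => Φ θ ω xh lam)) ∧
    (∀ θ, ∀ ω ∈ Ω, ∀ xh, ConvexOn ℝ Set.univ (fun lam => Φ θ ω xh lam)) := by
  subst hΦ
  refine ⟨?_, ?_, ?_⟩
  · -- Block (θ, ω)
    intro xh lam
    have hconv : Convex ℝ ((Set.univ : Set (Fin n → ℝ)) ×ˢ Ω) := convex_univ.prod hΩ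
    have key1 : ∀ (i : Fin N) (j : Fin n), ComboAffine ((Set.univ : Set (Fin n → ℝ)) ×ˢ Ω)
        (fun tw : (Fin n → ℝ) × (Fin q → ℝ) =>
          Q.mulVec (xh i) j + R.mulVec (u i) j + tw.1 j + (A tw.2)ᵀ.mulVec (lam i) j) := by
      intro i j x _ y _ a c _ _ hac
      have hA : A (a • x.2 + c • y.2) = a • A x.2 + c • A y.2 := Convex.combo_affine_apply hac
      have hc1 : c = 1 - a := by linarith
      subst hc1
      simp only [Prod.fst_add, Prod.snd_add, Prod.smul_fst, Prod.smul_snd, hA,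
        transpose_add, transpose_smul, add_mulVec, smul_mulVec,
        Pi.add_apply, Pi.smul_apply, smul_eq_mul]
      ring
    have key2 : ∀ (i : Fin N) (j : Fin k), ComboAffine ((Set.univ : Set (Fin n → ℝ)) ×ˢ Ω)
        (fun tw : (Fin n → ℝ) × (Fin q → ℝ) =>
          (A tw.2).mulVec (xh i) j - b (u i) tw.2 j) := by
      intro i j x _ y _ a c _ _ hac
      have hA : A (a • x.2 + c • y.2) = a • A x.2 + c • A y.2 := Convex.combo_affine_apply hac
      have hB : b (u i) (a • x.2 + c • y.2) = a • b (u i) x.2 + c • b (u i) y.2 :=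
        Convex.combo_affine_apply hac
      have hc1 : c = 1 - a := by linarith
      subst hc1
      simp only [Prod.snd_add, Prod.smul_snd, hA, hB, add_mulVec, smul_mulVec,
        Pi.add_apply, Pi.smul_apply, smul_eq_mul]
      ring
    refine convexOn_finset_sum hconv _ fun i _ => ?_
    have h1 := convexOn_const_mul hc₁.le (convexOn_finset_sum hconv Finset.univ
      (fun j _ => (key1 i j).comp_convexOn hconv convexOn_abs'))
    have h2 := convexOn_const_mul hc₂.le (convexOn_finset_sum hconv Finset.univ
      (fun j _ => (key2 i j).comp_convexOn hconv convexOn_max0))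
    have h3 := convexOn_const_mul hc₃.le
      ((ComboAffine.sum Finset.univ (fun j _ => (key2 i j).const_mul (lam i j))).comp_convexOn
        hconv convexOn_abs')
    exact (((convexOn_const _ hconv).add h1).add h2).add h3
  · -- Block xh
    intro θ ω hω lam
    have kA : ∀ (i : Fin N) (j : Fin n), ComboAffine (Set.univ : Set (Fin N → Fin n → ℝ))
        (fun xh => xs i j - xh i j) := by
      intro i j x _ y _ a c _ _ hac
      have hc1 : c = 1 - a := by linarith
      subst hc1
      simp only [Pi.add_apply, Pi.smul_apply, smul_eq_mul]
      ring
    have kB : ∀ (i : Fin N) (j : Fin n), ComboAffine (Set.univ : Set (Fin N → Fin n → ℝ))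
        (fun xh => Q.mulVec (xh i) j + R.mulVec (u i) j + θ j + (A ω)ᵀ.mulVec (lam i) j) := by
      intro i j x _ y _ a c _ _ hac
      have hc1 : c = 1 - a := by linarith
      subst hc1
      simp only [Pi.add_apply, Pi.smul_apply, mulVec_add, mulVec_smul, smul_eq_mul]
      ring
    have kC : ∀ (i : Fin N) (j : Fin k), ComboAffine (Set.univ : Set (Fin N → Fin n → ℝ))
        (fun xh => (A ω).mulVec (xh i) j - b (u i) ω j) := by
      intro i j x _ y _ a c _ _ hac
      have hc1 : c = 1 - a := by linarith
      subst hc1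
      simp only [Pi.add_apply, Pi.smul_apply, mulVec_add, mulVec_smul, smul_eq_mul]
      ring
    refine convexOn_finset_sum convex_univ _ fun i _ => ?_
    have h0 := convexOn_finset_sum convex_univ Finset.univ
      (fun j _ => (kA i j).comp_convexOn convex_univ
        (Even.convexOn_pow even_two : ConvexOn ℝ Set.univ fun t : ℝ => t ^ 2))
    have h1 := convexOn_const_mul hc₁.le (convexOn_finset_sum convex_univ Finset.univ
      (fun j _ => (kB i j).comp_convexOn convex_univ convexOn_abs'))
    have h2 := convexOn_const_mul hc₂.le (convexOn_finset_sum convex_univ Finset.univ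
      (fun j _ => (kC i j).comp_convexOn convex_univ convexOn_max0))
    have h3 := convexOn_const_mul hc₃.le
      ((ComboAffine.sum Finset.univ (fun j _ => (kC i j).const_mul (lam i j))).comp_convexOn
        convex_univ convexOn_abs')
    exact ((h0.add h1).add h2).add h3
  · -- Block lam
    intro θ ω hω xh
    have kD : ∀ (i : Fin N) (j : Fin n), ComboAffine (Set.univ : Set (Fin N → Fin k → ℝ))
        (fun lam => Q.mulVec (xh i) j + R.mulVec (u i) j + θ j + (A ω)ᵀ.mulVec (lam i) j) := by
      intro i j x _ y _ a c _ _ hac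
      have hc1 : c = 1 - a := by linarith
      subst hc1
      simp only [Pi.add_apply, Pi.smul_apply, mulVec_add, mulVec_smul, smul_eq_mul]
      ring
    have kE : ∀ (i : Fin N) (j : Fin k), ComboAffine (Set.univ : Set (Fin N → Fin k → ℝ))
        (fun lam => lam i j * ((A ω).mulVec (xh i) j - b (u i) ω j)) := by
      intro i j x _ y _ a c _ _ hac
      have hc1 : c = 1 - a := by linarith
      subst hc1
      simp only [Pi.add_apply, Pi.smul_apply, smul_eq_mul]
      ring
    refine convexOn_finset_sum convex_univ _ fun i _ => ?_
    have h1 := convexOn_const_mul hc₁.le (convexOn_finset_sum convex_univ Finset.univ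
      (fun j _ => (kD i j).comp_convexOn convex_univ convexOn_abs'))
    have h3 := convexOn_const_mul hc₃.le
      ((ComboAffine.sum Finset.univ (fun j _ => kE i j)).comp_convexOn
        convex_univ convexOn_abs')
    exact (((convexOn_const _ convex_univ).add h1).add (convexOn_const _ convex_univ)).add h3
end
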